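/- If f satisfies the high-order descent lemma with power p > 1 and constant L_p > 0, g is proper lsc, φ = f + g is coercive (φ(x) → +∞ as ‖x‖ → ∞), and γ ∈ (0, 1/L_p), then the high-order forward-backward envelope φ_γ^p is coercive. -/
import Mathlib


open scoped RealInnerProductSpace

/-- The high-order forward-backward envelope (HiFBE). -/
noncomputable def hifbe {n : ℕ} (f : EuclideanSpace ℝ (Fin n) → ℝ)
    (f' : EuclideanSpace ℝ (Fin n) → EuclideanSpace ℝ (Fin n))
    (g : EuclideanSpace ℝ (Fin n) → EReal) (p γ : ℝ)
    (x : EuclideanSpace ℝ (Fin n)) : EReal :=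
  ⨅ y : EuclideanSpace ℝ (Fin n),
    ((f x + ⟪f' x, y - x⟫ + 1 / (p * γ) * ‖x - y‖ ^ p : ℝ) : EReal) + g y
open Filter Topology

/-- A lower semicontinuous `EReal`-valued function that is never `⊥` is bounded below
by a real constant on a compact set. -/
lemma lsc_bddBelow_on_compact {X : Type*} [TopologicalSpace X] {g : X → EReal}
    (hlsc : LowerSemicontinuous g) (hbot : ∀ z, g z ≠ ⊥) {K : Set X} (hK : IsCompact K) :
    ∃ r : ℝ, ∀ y ∈ K, (r : EReal) ≤ g y := by
  have ha : ∀ y : X, ∃ a : ℝ, (a : EReal) < g y := by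
    intro y
    rcases EReal.exists_between_coe_real (bot_lt_iff_ne_bot.2 (hbot y)) with ⟨a, _, h2⟩
    exact ⟨a, h2⟩
  choose a ha using ha
  rcases hK.elim_nhds_subcover (fun y => {z | (a y : EReal) < g z})
      (fun y _ => hlsc y _ (ha y)) with ⟨t, _, hcov⟩
  rcases t.eq_empty_or_nonempty with rfl | hne
  · exact ⟨0, fun y hy => absurd (hcov hy) (by simp)⟩
  · refine ⟨t.inf' hne a, fun y hy => ?_⟩
    obtain ⟨z, hz, hyz⟩ : ∃ z ∈ t, (a z : EReal) < g y := by
      simpa using hcov hy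
    exact le_trans (EReal.coe_le_coe_iff.2 (t.inf'_le a hz)) hyz.le

theorem stmt_12 {n : ℕ} (f : EuclideanSpace ℝ (Fin n) → ℝ)
    (f' : EuclideanSpace ℝ (Fin n) → EuclideanSpace ℝ (Fin n))
    (g : EuclideanSpace ℝ (Fin n) → EReal) (p L γ : ℝ)
    (hp : 1 < p) (hL : 0 < L) (hγ0 : 0 < γ) (hγ1 : γ < 1 / L)
    (hdiff : ∀ z, HasGradientAt f (f' z) z)
    (hdesc : ∀ x y, f y ≤ f x + ⟪f' x, y - x⟫ + L / p * ‖y - x‖ ^ p)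
    (hproper_ne_top : ∃ z, g z ≠ ⊤) (hproper_ne_bot : ∀ z, g z ≠ ⊥)
    (hlsc : LowerSemicontinuous g)
    (hcoercive : Tendsto (fun x => (f x : EReal) + g x)
      (cocompact (EuclideanSpace ℝ (Fin n))) (𝓝 ⊤)) :
    Tendsto (hifbe f f' g p γ) (cocompact (EuclideanSpace ℝ (Fin n))) (𝓝 ⊤) := by
  classical
  have hp0 : (0 : ℝ) < p := lt_trans one_pos hp
  set c : ℝ := 1 / (p * γ) - L / p with hc
  have hγL : γ * L < 1 := (lt_div_iff₀ hL).1 hγ1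
  have hcpos : 0 < c := by
    rw [hc, sub_pos, div_lt_div_iff₀ hp0 (by positivity)]
    nlinarith
  -- Key pointwise lower bound, real version
  have hkey : ∀ x y : EuclideanSpace ℝ (Fin n), f y + c * ‖x - y‖ ^ p ≤
      f x + ⟪f' x, y - x⟫ + 1 / (p * γ) * ‖x - y‖ ^ p := by
    intro x y
    have h := hdesc x y
    rw [norm_sub_rev] at h
    have hsum : c * ‖x - y‖ ^ p + L / p * ‖x - y‖ ^ p = 1 / (p * γ) * ‖x - y‖ ^ p := by
      rw [hc]; ring
    linarith
  -- Coercivity, quantified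
  have hco : ∀ M : ℝ, ∃ K : Set (EuclideanSpace ℝ (Fin n)), IsCompact K ∧
      ∀ y ∉ K, (M : EReal) < (f y : EReal) + g y := by
    intro M
    have h := EReal.tendsto_nhds_top_iff_real.1 hcoercive M
    rw [eventually_iff, mem_cocompact] at h
    obtain ⟨K, hK, hsub⟩ := h
    exact ⟨K, hK, fun y hy => hsub hy⟩
    
  -- Global lower bound on φ = f + g
  obtain ⟨K₀, hK₀, hout₀⟩ := hco 0
  obtain ⟨mg, hmg⟩ := lsc_bddBelow_on_compact hlsc hproper_ne_bot hK₀
  have hfc : Continuous f := continuous_iff_continuousAt.2 fun z => (hdiff z).continuousAt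
  obtain ⟨mf, hmf⟩ : ∃ mf : ℝ, ∀ y ∈ K₀, mf ≤ f y := by
    rcases K₀.eq_empty_or_nonempty with rfl | hne
    · exact ⟨0, fun y hy => absurd hy (by simp)⟩
    · obtain ⟨z, hz, hmin⟩ := hK₀.exists_isMinOn hne hfc.continuousOn
      exact ⟨f z, fun y hy => hmin hy⟩
  set m : ℝ := min (mf + mg) 0 with hm
  have hglob : ∀ y : EuclideanSpace ℝ (Fin n), (m : EReal) ≤ (f y : EReal) + g y := by
    intro y
    by_cases hy : y ∈ K₀
    · calc (m : EReal) ≤ ((mf + mg : ℝ) : EReal) :=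
            EReal.coe_le_coe_iff.2 (min_le_left _ _)
        _ = (mf : EReal) + (mg : EReal) := EReal.coe_add _ _
        _ ≤ (f y : EReal) + g y :=
            add_le_add (EReal.coe_le_coe_iff.2 (hmf y hy)) (hmg y hy)
    · calc (m : EReal) ≤ ((0 : ℝ) : EReal) := EReal.coe_le_coe_iff.2 (min_le_right _ _)
        _ ≤ (f y : EReal) + g y := (hout₀ y hy).le
  rw [EReal.tendsto_nhds_top_iff_real]
  intro M
  obtain ⟨K, hK, hKout⟩ := hco (M + 1)
  obtain ⟨R, hR⟩ := hK.isBounded.subset_closedBall 0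
  set T : ℝ := max 1 ((M + 1 - m) / c) with hT
  have hT1 : (1 : ℝ) ≤ T := le_max_left _ _
  -- the main pointwise estimate
  have hmain : ∀ x : EuclideanSpace ℝ (Fin n), R + T < ‖x‖ → (M : EReal) < hifbe f f' g p γ x := by
    intro x hx
    have hM1 : (M : EReal) < ((M + 1 : ℝ) : EReal) := EReal.coe_lt_coe_iff.2 (by linarith)
    refine lt_of_lt_of_le hM1 (le_iInf fun y => ?_)
    have hterm : (((f y + c * ‖x - y‖ ^ p : ℝ)) : EReal) + g y ≤
        ((f x + ⟪f' x, y - x⟫ + 1 / (p * γ) * ‖x - y‖ ^ p : ℝ) : EReal) + g y :=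
      add_le_add (EReal.coe_le_coe_iff.2 (hkey x y)) le_rfl
    refine le_trans ?_ hterm
    have hrw : (((f y + c * ‖x - y‖ ^ p : ℝ)) : EReal) + g y =
        ((f y : EReal) + g y) + ((c * ‖x - y‖ ^ p : ℝ) : EReal) := by
      rw [EReal.coe_add]; abel
    rw [hrw]
    have hd0 : (0 : ℝ) ≤ ‖x - y‖ := norm_nonneg _
    have hdp0 : (0 : ℝ) ≤ c * ‖x - y‖ ^ p := by positivity
    by_cases hy : y ∈ K
    · -- y in the ball: the distance term is large
      have hyR : ‖y‖ ≤ R := by simpa [Metric.mem_closedBall, dist_eq_norm] using hR hy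
      have hdT : T ≤ ‖x - y‖ := by
        have := norm_sub_norm_le x y
        have h2 : ‖x‖ - ‖y‖ ≤ ‖x - y‖ := by
          have := norm_sub_norm_le x y
          linarith [le_abs_self (‖x‖ - ‖y‖), abs_norm_sub_norm_le x y]
        linarith
      have hTd : T ≤ ‖x - y‖ ^ p := by
        calc T = T ^ (1 : ℝ) := (Real.rpow_one T).symm
          _ ≤ T ^ p := Real.rpow_le_rpow_of_exponent_le hT1 hp.le
          _ ≤ ‖x - y‖ ^ p := Real.rpow_le_rpow (by linarith) hdT hp0.le
      have hcd : M + 1 - m ≤ c * ‖x - y‖ ^ p := by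
        have h1 : (M + 1 - m) / c ≤ T := le_max_right _ _
        have h2 : (M + 1 - m) / c ≤ ‖x - y‖ ^ p := le_trans h1 hTd
        calc M + 1 - m = (M + 1 - m) / c * c := by field_simp
          _ ≤ ‖x - y‖ ^ p * c := mul_le_mul_of_nonneg_right h2 hcpos.le
          _ = c * ‖x - y‖ ^ p := mul_comm _ _
      calc ((M + 1 : ℝ) : EReal) = ((m : ℝ) : EReal) + ((M + 1 - m : ℝ) : EReal) := by
            rw [← EReal.coe_add]; norm_num
        _ ≤ ((f y : EReal) + g y) + ((c * ‖x - y‖ ^ p : ℝ) : EReal) :=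
            add_le_add (hglob y) (EReal.coe_le_coe_iff.2 hcd)
    · -- y outside K: φ(y) itself is large
      calc ((M + 1 : ℝ) : EReal) = ((M + 1 : ℝ) : EReal) + ((0 : ℝ) : EReal) := by
            norm_num
        _ ≤ ((f y : EReal) + g y) + ((c * ‖x - y‖ ^ p : ℝ) : EReal) :=
            add_le_add (hKout y hy).le (EReal.coe_le_coe_iff.2 hdp0)
  rw [eventually_iff, mem_cocompact]
  refine ⟨Metric.closedBall 0 (R + T), isCompact_closedBall _ _, fun x hx => ?_⟩
  have : R + T < ‖x‖ := by
    by_contra h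
    exact hx (by simpa [Metric.mem_closedBall, dist_eq_norm] using not_lt.1 h)
  exact hmain x this
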